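/- Let H > 0, γ₀ ≥ 0, B > 0 and q, q₀ ∈ ℝ². Then B·log₂(1 + γ₀/(H² + ‖q‖²)) ≥ B·[log₂(1 + γ₀/(H² + ‖q₀‖²)) − (log₂ e)·γ₀·(‖q‖² − ‖q₀‖²) / ((H² + γ₀ + ‖q₀‖²)·(H² + ‖q₀‖²))], with equality when q = q₀. -/

import Mathlib

open Real

lemma key_log_ineq (γ a a₀ : ℝ) (hγ : 0 ≤ γ) (ha : 0 < a) (ha₀ : 0 < a₀) :
    Real.log (1 + γ / a₀) - γ * (a - a₀) / ((a₀ + γ) * a₀) ≤ Real.log (1 + γ / a) := by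
  have haγ : 0 < a + γ := by linarith
  have ha₀γ : 0 < a₀ + γ := by linarith
  have hu : (0:ℝ) < ((a₀ + γ) * a) / ((a + γ) * a₀) := by positivity
  have h1 := Real.log_le_sub_one_of_pos hu
  have e0 : (1:ℝ) + γ / a₀ = (a₀ + γ) / a₀ := by field_simp
  have e1 : (1:ℝ) + γ / a = (a + γ) / a := by field_simp
  have hlog : Real.log (((a₀ + γ) * a) / ((a + γ) * a₀))
      = Real.log (1 + γ / a₀) - Real.log (1 + γ / a) := by
    rw [e0, e1, Real.log_div (by positivity) (by positivity),
      Real.log_div (by positivity) (by positivity),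
      Real.log_div (by positivity) (by positivity),
      Real.log_mul (by positivity) (by positivity),
      Real.log_mul (by positivity) (by positivity)]
    ring
  have h2 : ((a₀ + γ) * a) / ((a + γ) * a₀) - 1 ≤ γ * (a - a₀) / ((a₀ + γ) * a₀) := by
    rw [div_sub_one (by positivity), div_le_div_iff₀ (by positivity) (by positivity)]
    nlinarith [sq_nonneg (a - a₀), mul_nonneg (mul_nonneg hγ (sq_nonneg (a - a₀))) ha₀.le]
  linarith [hlog ▸ h1]

theorem stmt_10 (H γ₀ B : ℝ) (hH : 0 < H) (hγ : 0 ≤ γ₀) (hB : 0 < B)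
    (q q₀ : EuclideanSpace ℝ (Fin 2)) :
    B * Real.logb 2 (1 + γ₀ / (H ^ 2 + ‖q‖ ^ 2))
      ≥ B * (Real.logb 2 (1 + γ₀ / (H ^ 2 + ‖q₀‖ ^ 2))
        - (Real.logb 2 (Real.exp 1)) * γ₀ * (‖q‖ ^ 2 - ‖q₀‖ ^ 2)
            / ((H ^ 2 + γ₀ + ‖q₀‖ ^ 2) * (H ^ 2 + ‖q₀‖ ^ 2))) ∧
    (q = q₀ →
      B * Real.logb 2 (1 + γ₀ / (H ^ 2 + ‖q‖ ^ 2))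
        = B * (Real.logb 2 (1 + γ₀ / (H ^ 2 + ‖q₀‖ ^ 2))
          - (Real.logb 2 (Real.exp 1)) * γ₀ * (‖q‖ ^ 2 - ‖q₀‖ ^ 2)
              / ((H ^ 2 + γ₀ + ‖q₀‖ ^ 2) * (H ^ 2 + ‖q₀‖ ^ 2)))) := by
  have hlog2 : (0:ℝ) < Real.log 2 := Real.log_pos (by norm_num)
  have ha : 0 < H ^ 2 + ‖q‖ ^ 2 := by positivity
  have ha₀ : 0 < H ^ 2 + ‖q₀‖ ^ 2 := by positivity
  have hkey := key_log_ineq γ₀ (H ^ 2 + ‖q‖ ^ 2) (H ^ 2 + ‖q₀‖ ^ 2) hγ ha ha₀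
  have he : Real.logb 2 (Real.exp 1) = 1 / Real.log 2 := by
    rw [Real.logb, Real.log_exp]
  constructor
  · apply mul_le_mul_of_nonneg_left _ hB.le
    rw [he, Real.logb, Real.logb]
    have hD : (H ^ 2 + γ₀ + ‖q₀‖ ^ 2) * (H ^ 2 + ‖q₀‖ ^ 2)
        = ((H ^ 2 + ‖q₀‖ ^ 2) + γ₀) * (H ^ 2 + ‖q₀‖ ^ 2) := by ring
    have hterm : 1 / Real.log 2 * γ₀ * (‖q‖ ^ 2 - ‖q₀‖ ^ 2)
          / ((H ^ 2 + γ₀ + ‖q₀‖ ^ 2) * (H ^ 2 + ‖q₀‖ ^ 2))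
        = (γ₀ * ((H ^ 2 + ‖q‖ ^ 2) - (H ^ 2 + ‖q₀‖ ^ 2))
            / (((H ^ 2 + ‖q₀‖ ^ 2) + γ₀) * (H ^ 2 + ‖q₀‖ ^ 2))) / Real.log 2 := by
      rw [hD]; field_simp; ring
    rw [hterm, div_sub_div_same]
    gcongr
  · intro hq
    subst hq
    simp
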